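/- The function d : ℝ × ℝ → ℝ defined by d(x,y) = |y − x| / max(|x|, |y|) for (x,y) ≠ (0,0) and d(0,0) = 0 is a distance on ℝ (the relative metric). -/

import Mathlib

def IsDistance (d : ℝ → ℝ → ℝ) : Prop :=
  (∀ x y, 0 ≤ d x y) ∧ (∀ x y, d x y = 0 ↔ x = y) ∧
  (∀ x y, d x y = d y x) ∧ (∀ x y z, d x z ≤ d x y + d y z)

private lemma rm_nonneg (x y : ℝ) :
    0 ≤ if (x, y) = ((0 : ℝ), (0 : ℝ)) then 0 else |y - x| / max |x| |y| := by
  split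
  · exact le_refl 0
  · positivity

private lemma hard0 (x y z : ℝ) (h1 : |x| ≤ |z|) (h2 : |z| ≤ |y|) (hy : 0 ≤ y) :
    |z - x| * |y| ≤ (|y - x| + |z - y|) * |z| := by
  have hyy : |y| = y := abs_of_nonneg hy
  have hzy : z ≤ y := (le_abs_self z).trans (hyy ▸ h2)
  have hxy : x ≤ y := (le_abs_self x).trans (hyy ▸ (h1.trans h2))
  rw [abs_of_nonneg (sub_nonneg.2 hxy), abs_of_nonpos (sub_nonpos.2 hzy), hyy]
  rcases le_total 0 z with hz | hz
  · have hxz : x ≤ z := (le_abs_self x).trans ((abs_of_nonneg hz) ▸ h1)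
    rw [abs_of_nonneg (sub_nonneg.2 hxz), abs_of_nonneg hz]
    nlinarith [mul_nonneg (by linarith [neg_abs_le x, (abs_of_nonneg hz) ▸ h1] : (0:ℝ) ≤ x + z) (sub_nonneg.2 hzy)]
  · have hz' : |z| = -z := abs_of_nonpos hz
    have hxz : z ≤ x := by
      have := neg_abs_le x
      linarith [hz' ▸ h1]
    have hxz2 : x + z ≤ 0 := by
      have := le_abs_self x
      linarith [hz' ▸ h1]
    rw [abs_of_nonpos (sub_nonpos.2 hxz), hz']
    nlinarith [mul_nonpos_of_nonneg_of_nonpos (sub_nonneg.2 hzy) hxz2]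

private lemma hard (x y z : ℝ) (h1 : |x| ≤ |z|) (h2 : |z| ≤ |y|) :
    |z - x| * |y| ≤ (|y - x| + |z - y|) * |z| := by
  rcases le_total 0 y with hy | hy
  · exact hard0 x y z h1 h2 hy
  · have h := hard0 (-x) (-y) (-z) (by simpa using h1) (by simpa using h2) (by linarith)
    have e1 : -z - -x = -(z - x) := by ring
    have e2 : -y - -x = -(y - x) := by ring
    have e3 : -z - -y = -(z - y) := by ring
    rw [e1, e2, e3, abs_neg, abs_neg, abs_neg, abs_neg, abs_neg] at h
    exact h

private lemma tri_half (x y z : ℝ) (hy : y ≠ 0) (hxz : |x| ≤ |z|) (hz : z ≠ 0) :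
    |z - x| / max |x| |z| ≤ |y - x| / max |x| |y| + |z - y| / max |y| |z| := by
  have hz' : 0 < |z| := abs_pos.2 hz
  have hy' : 0 < |y| := abs_pos.2 hy
  have htri : |z - x| ≤ |z - y| + |y - x| := abs_sub_le z y x
  rw [max_eq_right hxz]
  rcases le_total |y| |x| with h1 | h1
  · have hx' : 0 < |x| := lt_of_lt_of_le hy' h1
    rw [max_eq_left h1, max_eq_right (h1.trans hxz)]
    have s1 : |z - x| / |z| ≤ (|z - y| + |y - x|) / |z| := by gcongr
    have s2 : (|z - y| + |y - x|) / |z| = |z - y| / |z| + |y - x| / |z| := add_div _ _ _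
    have s3 : |y - x| / |z| ≤ |y - x| / |x| := by gcongr
    linarith
  · rcases le_total |y| |z| with h2 | h2
    · rw [max_eq_right h1, max_eq_right h2]
      have s1 : |z - x| / |z| ≤ (|z - y| + |y - x|) / |z| := by gcongr
      have s2 : (|z - y| + |y - x|) / |z| = |z - y| / |z| + |y - x| / |z| := add_div _ _ _
      have s3 : |y - x| / |z| ≤ |y - x| / |y| := by gcongr
      linarith
    · rw [max_eq_right h1, max_eq_left h2]
      rw [← add_div, div_le_div_iff₀ hz' hy']
      exact hard x y z hxz h2

private lemma tri_aux (x y z : ℝ) (hy : y ≠ 0) (hxz : x ≠ 0 ∨ z ≠ 0) :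
    |z - x| / max |x| |z| ≤ |y - x| / max |x| |y| + |z - y| / max |y| |z| := by
  rcases le_total |x| |z| with h | h
  · have hz : z ≠ 0 := by
      rcases hxz with hx | hz
      · intro hz0
        apply hx
        have hle : |x| ≤ 0 := by simpa [hz0] using h
        exact abs_eq_zero.1 (le_antisymm hle (abs_nonneg x))
      · exact hz
    exact tri_half x y z hy h hz
  · have hx : x ≠ 0 := by
      rcases hxz with hx | hz
      · exact hx
      · intro hx0
        apply hz
        have hle : |z| ≤ 0 := by simpa [hx0] using h
        exact abs_eq_zero.1 (le_antisymm hle (abs_nonneg z))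
    have := tri_half z y x hy h hx
    rw [abs_sub_comm x z, max_comm |z| |x|, abs_sub_comm y z, max_comm |z| |y|,
      abs_sub_comm x y, max_comm |y| |x|] at this
    linarith

theorem relative_metric :
    IsDistance (fun x y : ℝ =>
      if (x, y) = ((0 : ℝ), (0 : ℝ)) then 0
      else |y - x| / max |x| |y|) := by
  refine ⟨fun x y => rm_nonneg x y, ?_, ?_, ?_⟩
  · intro x y
    dsimp only
    split
    · rename_i h
      rw [Prod.mk.injEq] at h
      simp [h.1, h.2]
    · rename_i h
      have hmax : 0 < max |x| |y| := by
        rcases (not_and_or.1 (by simpa [Prod.mk.injEq] using h)) with hx | hy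
        · exact lt_max_of_lt_left (abs_pos.2 hx)
        · exact lt_max_of_lt_right (abs_pos.2 hy)
      rw [div_eq_zero_iff]
      constructor
      · rintro (h0 | h0)
        · have := abs_eq_zero.1 h0
          linarith [sub_eq_zero.1 this]
        · exact absurd h0 hmax.ne'
      · intro hxy
        subst hxy
        simp
  · intro x y
    dsimp only
    split <;> split
    · rfl
    · rename_i h1 h2
      rw [Prod.mk.injEq] at h1 h2
      exact absurd ⟨h1.2, h1.1⟩ h2
    · rename_i h1 h2
      rw [Prod.mk.injEq] at h1 h2
      exact absurd ⟨h2.2, h2.1⟩ h1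
    · rw [abs_sub_comm, max_comm]
  · intro x y z
    dsimp only
    by_cases hxz0 : (x, z) = ((0 : ℝ), 0)
    · rw [if_pos hxz0]
      exact add_nonneg (rm_nonneg x y) (rm_nonneg y z)
    · rw [if_neg hxz0]
      by_cases hy : y = 0
      · subst hy
        by_cases hx : x = 0
        · rw [if_pos (by simp [hx]), if_neg (by simpa [hx, Prod.mk.injEq] using hxz0)]
          have hz : z ≠ 0 := by
            intro hz; exact hxz0 (by simp [hx, hz])
          simp [hx]
        · by_cases hz : z = 0
          · rw [if_neg (by simp [Prod.mk.injEq, hx]), if_pos (by simp [hz])]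
            simp [hz]
          · rw [if_neg (by simp [Prod.mk.injEq, hx]), if_neg (by simp [Prod.mk.injEq, hz])]
            have hx' : 0 < |x| := abs_pos.2 hx
            have hz' : 0 < |z| := abs_pos.2 hz
            have hm : 0 < max |x| |z| := lt_max_of_lt_left hx'
            rw [div_le_iff₀ hm]
            have hsub : |z - x| ≤ |z| + |x| := by
              calc |z - x| = |z + -x| := by ring_nf
                _ ≤ |z| + |-x| := abs_add_le _ _
                _ = |z| + |x| := by rw [abs_neg]
            have e1 : |0 - x| / max |x| |0| = 1 := by
              simp [abs_div, div_self hx'.ne']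
            have e2 : |z - 0| / max |0| |z| = 1 := by
              simp [div_self hz'.ne']
            rw [e1, e2]
            have := le_max_left |x| |z|
            have := le_max_right |x| |z|
            nlinarith
      · rw [if_neg (by simp [Prod.mk.injEq, hy]), if_neg (by simp [Prod.mk.injEq, hy])]
        apply tri_aux _ _ _ hy
        rcases eq_or_ne x 0 with hx | hx
        · exact Or.inr fun hz => hxz0 (by simp [hx, hz])
        · exact Or.inl hx
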